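/- The function x ↦ (1/2)(|x| - π)^2 - π^2/6 on [-π, π] has Fourier cosine expansion 2·∑_{k=1}^∞ k^{-2}·cos(kx); that is, for all x ∈ [-π, π], 2·∑_{k=1}^∞ k^{-2}·cos(kx) = (1/2)(|x| - π)^2 - π^2/6. -/

import Mathlib

open Real

/-- For all `x ∈ [-π, π]`,
`2 ∑_{k≥1} cos (k x) / k² = (1/2)(|x| - π)² - π²/6`. -/
theorem stmt1 (x : ℝ) (hx : x ∈ Set.Icc (-π) π) :
    2 * ∑' k : ℕ, Real.cos (((k : ℝ) + 1) * x) / ((k : ℝ) + 1) ^ 2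
      = (1 / 2) * (|x| - π) ^ 2 - π ^ 2 / 6 := by
  have hπ := Real.pi_pos
  have hxabs : |x| ∈ Set.Icc 0 π := by
    rw [Set.mem_Icc] at hx ⊢
    constructor
    · exact abs_nonneg x
    · rw [abs_le]; exact hx
  set y : ℝ := |x| / (2 * π) with hy
  have hy01 : y ∈ Set.Icc (0 : ℝ) 1 := by
    constructor
    · positivity
    · rw [hy, div_le_one (by positivity)]
      nlinarith [hxabs.2]
  have H := hasSum_one_div_nat_pow_mul_cos (k := 1) one_ne_zero hy01
  have hB : (Polynomial.map (algebraMap ℚ ℝ) (Polynomial.bernoulli (2 * 1))).eval y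
      = y ^ 2 - y + 1 / 6 := by
    simp [Polynomial.bernoulli, Finset.sum_range_succ, Polynomial.eval_monomial, bernoulli]
    ring
  have hcos : ∀ n : ℕ, Real.cos (2 * π * n * y) = Real.cos (n * x) := by
    intro n
    have h2π : (2 : ℝ) * π ≠ 0 := by positivity
    rw [hy]
    rw [show 2 * π * n * (|x| / (2 * π)) = n * |x| by field_simp]
    rcases abs_cases x with ⟨h, _⟩ | ⟨h, _⟩
    · rw [h]
    · rw [h, mul_neg, Real.cos_neg]
  have H2 : HasSum (fun n : ℕ => 1 / ((n : ℝ)) ^ 2 * Real.cos ((n : ℝ) * x))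
      (π ^ 2 * (y ^ 2 - y + 1 / 6)) := by
    have := H
    rw [hB] at this
    convert this using 2 with n
    · rw [hcos n]
    · norm_num
      ring
  have H3 : HasSum (fun k : ℕ => Real.cos (((k : ℝ) + 1) * x) / ((k : ℝ) + 1) ^ 2)
      (π ^ 2 * (y ^ 2 - y + 1 / 6)) := by
    have h0 := (hasSum_nat_add_iff' (f := fun n : ℕ =>
        1 / ((n : ℝ)) ^ 2 * Real.cos ((n : ℝ) * x)) 1).mpr H2
    simp only [Finset.range_one, Finset.sum_singleton, Nat.cast_zero] at h0
    norm_num at h0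
    refine h0.congr_fun fun k => ?_
    ring
  rw [H3.tsum_eq, hy]
  field_simp
  ring
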